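/- For all positive integers a, b: p^a ∑_{ℓ=0}^{b-1} [a+ℓ-1 choose ℓ]_q q^ℓ (1−·p)^ℓ = ∑_{s=0}^{b-1} [a+b-1 choose a+s]_q p^{a+s} (1−·p)^{b-1-s}. -/
import Mathlib


/-- The `q`-analog `[n]_q = 1 + q + ⋯ + q^(n-1)` of a natural number. -/
def qNum {R : Type*} [CommRing R] (q : R) (n : ℕ) : R := ∑ i ∈ Finset.range n, q ^ i

/-- The `q`-factorial `[n]! = [1][2]⋯[n]`. -/
def qFact {R : Type*} [CommRing R] (q : R) (n : ℕ) : R := ∏ i ∈ Finset.range n, qNum q (i + 1)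

/-- The Gaussian (`q`-)binomial coefficient, via the `q`-Pascal recursion. -/
def qBinom {R : Type*} [CommRing R] (q : R) : ℕ → ℕ → R
  | _, 0 => 1
  | 0, _ + 1 => 0
  | n + 1, k + 1 => qBinom q n k + q ^ (k + 1) * qBinom q n (k + 1)

/-- The `q`-shifted product `(1 −· p)^m = ∏_{i=0}^{m-1} (1 - p q^i)`. -/
def qProdSub {R : Type*} [CommRing R] (q p : R) (m : ℕ) : R :=
  ∏ i ∈ Finset.range m, (1 - p * q ^ i)

/-- The `q`-shifted power `(x +· y)^m = ∏_{i=0}^{m-1} (x + q^i y)`. -/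
def qProdAdd {R : Type*} [CommRing R] (q x y : R) (m : ℕ) : R :=
  ∏ i ∈ Finset.range m, (x + q ^ i * y)

section Aux

variable {R : Type*} [CommRing R] (q p : R)

lemma qBinom_succ_succ (n k : ℕ) :
    qBinom q (n+1) (k+1) = qBinom q n k + q ^ (k+1) * qBinom q n (k+1) := rfl

lemma qBinom_zero_right (n : ℕ) : qBinom q n 0 = 1 := by cases n <;> rfl

lemma qBinom_of_lt : ∀ {n k : ℕ}, n < k → qBinom q n k = 0 := by
  intro n
  induction n with
  | zero => intro k hk; match k, hk with | k+1, _ => rfl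
  | succ n ih =>
    intro k hk
    match k, hk with
    | k+1, hk => rw [qBinom_succ_succ, ih (by omega), ih (by omega)]; ring

lemma qBinom_self : ∀ n : ℕ, qBinom q n n = 1 := by
  intro n
  induction n with
  | zero => rfl
  | succ n ih => rw [qBinom_succ_succ, ih, qBinom_of_lt q (by omega)]; ring

lemma qBinom_pascal' : ∀ n k : ℕ, k ≤ n →
    qBinom q (n+1) (k+1) = q ^ (n-k) * qBinom q n k + qBinom q n (k+1) := by
  intro n
  induction n with
  | zero =>
    intro k hk
    interval_cases k
    simp [qBinom_succ_succ, qBinom_zero_right, qBinom_of_lt q (by omega : (0:ℕ) < 1)]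
  | succ n ih =>
    intro k hk
    rcases Nat.eq_or_lt_of_le hk with h | h
    · subst h
      rw [qBinom_of_lt q (show (n:ℕ)+1 < (n+1)+1 by omega), qBinom_self, qBinom_self]
      simp
    · have hk' : k ≤ n := by omega
      cases k with
      | zero =>
        conv_lhs => rw [qBinom_succ_succ q (n+1) 0, ih 0 (by omega)]
        conv_rhs => rw [qBinom_succ_succ q n 0]
        simp only [qBinom_zero_right, Nat.sub_zero]
        ring
      | succ j =>
        have hj : j ≤ n := by omega
        have hj' : j + 1 ≤ n := by omega
        conv_lhs => rw [qBinom_succ_succ q (n+1) (j+1), ih j hj, ih (j+1) hj']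
        conv_rhs => rw [qBinom_succ_succ q n j, qBinom_succ_succ q n (j+1)]
        have e1 : n + 1 - (j+1) = n - j := by omega
        have e2 : n - j = (n - (j+1)) + 1 := by omega
        rw [e1, e2]
        ring

lemma qBinom_symm : ∀ n k : ℕ, k ≤ n → qBinom q n k = qBinom q n (n - k) := by
  intro n
  induction n with
  | zero => intro k hk; interval_cases k; rfl
  | succ n ih =>
    intro k hk
    cases k with
    | zero => rw [qBinom_zero_right, Nat.sub_zero, qBinom_self]
    | succ j =>
      rcases Nat.eq_or_lt_of_le hk with h | h
      · rw [h]; simp [qBinom_self, qBinom_zero_right]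
      · have hj : j ≤ n := by omega
        have hj1 : j + 1 ≤ n := by omega
        rw [qBinom_succ_succ q n j, ih j hj, ih (j+1) hj1]
        have e : n + 1 - (j+1) = (n - (j+1)) + 1 := by omega
        rw [e, qBinom_pascal' q n (n - (j+1)) (by omega)]
        have e2 : n - (n - (j+1)) = j + 1 := by omega
        have e3 : n - j = n - (j+1) + 1 := by omega
        rw [e2, e3]
        ring

lemma qProdSub_succ (m : ℕ) :
    qProdSub q p (m+1) = qProdSub q p m * (1 - p * q ^ m) := Finset.prod_range_succ _ _

lemma q_parties_alt_key (c : ℕ) : ∀ b : ℕ, 1 ≤ b →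
    p ^ (c+1) * (∑ ℓ ∈ Finset.range b, qBinom q (c + ℓ) ℓ * q ^ ℓ * qProdSub q p ℓ) =
      ∑ s ∈ Finset.range b, qBinom q (c + b) (c + 1 + s) * p ^ (c + 1 + s) *
        qProdSub q p (b - 1 - s) := by
  intro b hb
  induction b, hb using Nat.le_induction with
  | base =>
    simp [qProdSub, qBinom_zero_right, qBinom_self]
  | succ b hb IH =>
    rw [Finset.sum_range_succ, mul_add, IH]
    have step1 : ∀ s ∈ Finset.range (b+1),
        qBinom q (c + (b+1)) (c + 1 + s) * p ^ (c + 1 + s) * qProdSub q p (b + 1 - 1 - s)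
        = q ^ (b - s) * (qBinom q (c + b) (c + s) * p ^ (c + 1 + s) * qProdSub q p (b - s))
          + qBinom q (c + b) (c + 1 + s) * p ^ (c + 1 + s) * qProdSub q p (b - s) := by
      intro s hs
      simp only [Finset.mem_range] at hs
      have h1 : c + (b+1) = (c + b) + 1 := by omega
      have h2 : c + 1 + s = (c + s) + 1 := by omega
      have h3 : b + 1 - 1 - s = b - s := by omega
      rw [h3, h1, h2, qBinom_pascal' q (c+b) (c+s) (by omega)]
      have h4 : c + b - (c + s) = b - s := by omega
      rw [h4, ← h2]
      ring
    rw [Finset.sum_congr rfl step1, Finset.sum_add_distrib,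
      Finset.sum_range_succ' (fun s =>
        q ^ (b - s) * (qBinom q (c + b) (c + s) * p ^ (c + 1 + s) * qProdSub q p (b - s))) b,
      Finset.sum_range_succ (fun s =>
        qBinom q (c + b) (c + 1 + s) * p ^ (c + 1 + s) * qProdSub q p (b - s)) b]
    simp only [Nat.add_zero, Nat.sub_zero, Nat.sub_self,
      qBinom_of_lt q (show c + b < c + 1 + b by omega), zero_mul]
    have hA : qBinom q (c + b) c = qBinom q (c + b) b := by
      rw [qBinom_symm q (c+b) b (by omega), Nat.add_sub_cancel]
    have hterm : ∀ s ∈ Finset.range b,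
        qBinom q (c + b) (c + 1 + s) * p ^ (c + 1 + s) * qProdSub q p (b - 1 - s)
        = q ^ (b - (s+1)) * (qBinom q (c + b) (c + (s+1)) * p ^ (c + 1 + (s+1)) *
            qProdSub q p (b - (s+1)))
          + qBinom q (c + b) (c + 1 + s) * p ^ (c + 1 + s) * qProdSub q p (b - s) := by
      intro s hs
      simp only [Finset.mem_range] at hs
      have e1 : b - (s+1) = b - 1 - s := by omega
      have e2 : c + (s+1) = c + 1 + s := by omega
      have e3 : c + 1 + (s+1) = (c + 1 + s) + 1 := by omega
      have e4 : b - s = (b - 1 - s) + 1 := by omega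
      rw [e1, e2, e3, e4, qProdSub_succ, pow_succ]
      ring
    rw [Finset.sum_congr rfl hterm, Finset.sum_add_distrib, hA]
    ring

end Aux

/-- Identity (3.18): for positive integers a, b,
`p^a ∑_{ℓ<b} [a+ℓ-1 choose ℓ] q^ℓ (1−·p)^ℓ = ∑_{s<b} [a+b-1 choose a+s] p^{a+s} (1−·p)^{b-1-s}`. -/
theorem q_parties_alt {R : Type*} [CommRing R] (q p : R) (a b : ℕ)
    (ha : 1 ≤ a) (hb : 1 ≤ b) :
    p ^ a * (∑ ℓ ∈ Finset.range b, qBinom q (a + ℓ - 1) ℓ * q ^ ℓ * qProdSub q p ℓ) =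
      ∑ s ∈ Finset.range b, qBinom q (a + b - 1) (a + s) * p ^ (a + s) *
        qProdSub q p (b - 1 - s) := by
  obtain ⟨c, rfl⟩ : ∃ c, a = c + 1 := ⟨a - 1, by omega⟩
  simp only [show ∀ x : ℕ, c + 1 + x - 1 = c + x from fun x => by omega,
    show ∀ s : ℕ, c + 1 + s = c + 1 + s from fun s => rfl]
  exact q_parties_alt_key q p c b hb
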